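/- Let G be a graph with independent core vertices, and let u, w be non-adjacent core-forbidden vertices. Let G' = G + {u,w}. Then every kernel vector of A(G) is also a kernel vector of A(G'); consequently η(G) ≤ η(G'), and if η(G') = η(G) then the core vertex set and the nullspace of G' coincide with those of G. -/
import Mathlib


open scoped Classical
open Matrix

variable {V : Type*} [Fintype V] [DecidableEq V]

/-- Nullity of a real square matrix: dimension of its kernel. -/
noncomputable def nullity {m : Type*} [Fintype m] (A : Matrix m m ℝ) : ℕ :=
  Module.finrank ℝ (LinearMap.ker A.mulVecLin)

/-- `v` is a core vertex with respect to the symmetric matrix `A`. -/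
def IsCore {m : Type*} [Fintype m] (A : Matrix m m ℝ) (v : m) : Prop :=
  ∃ x : m → ℝ, A.mulVec x = 0 ∧ x v ≠ 0

/-- The perturbation matrix adding the single edge `{u,w}`. -/
def edgeMat (u w : V) : Matrix V V ℝ :=
  Matrix.of fun i j => if (i = u ∧ j = w) ∨ (i = w ∧ j = u) then 1 else 0

/-- Adding an edge between two non-adjacent core-forbidden vertices of a graph with
independent core vertices: every kernel vector of `A(G)` remains a kernel vector of
`A(G+e)`, so `η(G) ≤ η(G+e)`; and if the nullity is preserved then the core vertex
set and the nullspace are preserved. -/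
theorem stmt_17 (G : SimpleGraph V) [DecidableRel G.Adj] (u w : V)
    (huw : u ≠ w) (hadj : ¬ G.Adj u w)
    (hu : ¬ IsCore (G.adjMatrix ℝ) u) (hw : ¬ IsCore (G.adjMatrix ℝ) w)
    (hind : ∀ a b : V, IsCore (G.adjMatrix ℝ) a → IsCore (G.adjMatrix ℝ) b →
      ¬ G.Adj a b) :
    (∀ x : V → ℝ, (G.adjMatrix ℝ).mulVec x = 0 →
        ((G.adjMatrix ℝ) + edgeMat u w).mulVec x = 0)
      ∧ nullity (G.adjMatrix ℝ) ≤ nullity ((G.adjMatrix ℝ) + edgeMat u w)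
      ∧ (nullity ((G.adjMatrix ℝ) + edgeMat u w) = nullity (G.adjMatrix ℝ) →
          (∀ v : V, IsCore ((G.adjMatrix ℝ) + edgeMat u w) v ↔
              IsCore (G.adjMatrix ℝ) v)
            ∧ ∀ x : V → ℝ, ((G.adjMatrix ℝ) + edgeMat u w).mulVec x = 0 ↔
                (G.adjMatrix ℝ).mulVec x = 0) := by

  -- core-forbidden means every kernel vector vanishes there
  have hu0 : ∀ x : V → ℝ, (G.adjMatrix ℝ).mulVec x = 0 → x u = 0 := by
    intro x hx
    by_contra h; exact hu ⟨x, hx, h⟩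
  have hw0 : ∀ x : V → ℝ, (G.adjMatrix ℝ).mulVec x = 0 → x w = 0 := by
    intro x hx
    by_contra h; exact hw ⟨x, hx, h⟩
  have hE : ∀ x : V → ℝ, x u = 0 → x w = 0 → (edgeMat u w).mulVec x = 0 := by
    intro x hxu hxw
    funext i
    show ∑ j, edgeMat u w i j * x j = 0
    refine Finset.sum_eq_zero ?_
    intro j _
    by_cases h : (i = u ∧ j = w) ∨ (i = w ∧ j = u)
    · rcases h with ⟨_, rfl⟩ | ⟨_, rfl⟩ <;> simp [hxw, hxu]
    · simp [edgeMat, h]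
  have hker : ∀ x : V → ℝ, (G.adjMatrix ℝ).mulVec x = 0 →
      ((G.adjMatrix ℝ) + edgeMat u w).mulVec x = 0 := by
    intro x hx
    rw [Matrix.add_mulVec, hx, hE x (hu0 x hx) (hw0 x hx), add_zero]
  have hle : LinearMap.ker (G.adjMatrix ℝ).mulVecLin ≤
      LinearMap.ker ((G.adjMatrix ℝ) + edgeMat u w).mulVecLin := by
    intro x hx
    exact hker x hx
  refine ⟨hker, Submodule.finrank_mono hle, ?_⟩
  intro hnul
  have heq : LinearMap.ker ((G.adjMatrix ℝ) + edgeMat u w).mulVecLin =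
      LinearMap.ker (G.adjMatrix ℝ).mulVecLin :=
    (Submodule.eq_of_le_of_finrank_eq hle hnul.symm).symm
  have hxeq : ∀ x : V → ℝ, ((G.adjMatrix ℝ) + edgeMat u w).mulVec x = 0 ↔
      (G.adjMatrix ℝ).mulVec x = 0 := by
    intro x
    constructor
    · intro hx
      have : x ∈ LinearMap.ker ((G.adjMatrix ℝ) + edgeMat u w).mulVecLin := hx
      rw [heq] at this; exact this
    · exact hker x
  exact ⟨fun v => ⟨fun ⟨x, hx, hv⟩ => ⟨x, (hxeq x).mp hx, hv⟩,
    fun ⟨x, hx, hv⟩ => ⟨x, (hxeq x).mpr hx, hv⟩⟩, hxeq⟩
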